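/- Let V be a real inner product space of dimension ≥ 6 with an orthogonal complex structure J, and let R be a curvature-like tensor on V. Suppose that K(X,Y) = K(X,Z) whenever X, Y are orthonormal with ⟨X,JY⟩ = 0 and X, Z are orthonormal with ⟨X,JZ⟩ = 0 (i.e. the anti-holomorphic sectional curvature is the same for all anti-holomorphic sections containing a given vector). Then K(X,Y) = K(Z,U) for any two orthonormal pairs (X,Y) and (Z,U) with ⟨X,JY⟩ = 0 and ⟨Z,JU⟩ = 0; that is, K takes the same value on all anti-holomorphic planes. (This is the chain argument (4.5)–(4.8) in the proof of Theorem 4.1, using that in dimension ≥ 6 one can choose a unit vector U orthogonal to X, JX, Z, JZ.) -/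
import Mathlib


open scoped RealInnerProductSpace

/-- **The chain argument (4.5)–(4.8) in the proof of Theorem 4.1.**
If the anti-holomorphic sectional curvature `K(X,Y) = R(X,Y,X,Y)` of a curvature-like
tensor `R` on a real inner product space of dimension `≥ 6` with orthogonal complex
structure `J` is the same for all anti-holomorphic sections containing a given vector,
then `K` takes the same value on all anti-holomorphic planes. -/
theorem antiholomorphic_sectional_curvature_constant_of_pointed_constant
    {V : Type*} [NormedAddCommGroup V] [InnerProductSpace ℝ V] [FiniteDimensional ℝ V]
    (hdim : 6 ≤ Module.finrank ℝ V)
    (J : V →ₗ[ℝ] V)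
    (hJiso : ∀ X Y : V, ⟪J X, J Y⟫ = ⟪X, Y⟫)
    (hJ2 : ∀ X : V, J (J X) = -X)
    (R : V →ₗ[ℝ] V →ₗ[ℝ] V →ₗ[ℝ] V →ₗ[ℝ] ℝ)
    (hR1 : ∀ X Y Z U : V, R X Y Z U = -R Y X Z U)
    (hR2 : ∀ X Y Z U : V, R X Y Z U = -R X Y U Z)
    (hR3 : ∀ X Y Z U : V, R X Y Z U = R Z U X Y)
    (hpt : ∀ X Y Z : V, ‖X‖ = 1 → ‖Y‖ = 1 → ‖Z‖ = 1 →
      ⟪X, Y⟫ = 0 → ⟪X, J Y⟫ = 0 → ⟪X, Z⟫ = 0 → ⟪X, J Z⟫ = 0 →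
      R X Y X Y = R X Z X Z) :
    ∀ X Y Z U : V, ‖X‖ = 1 → ‖Y‖ = 1 → ‖Z‖ = 1 → ‖U‖ = 1 →
      ⟪X, Y⟫ = 0 → ⟪X, J Y⟫ = 0 → ⟪Z, U⟫ = 0 → ⟪Z, J U⟫ = 0 →
      R X Y X Y = R Z U Z U := by
  intro X Y Z U hX hY hZ hU hXY hXJY hZU hZJU
  -- ⟪a, J b⟫ = -⟪J a, b⟫
  have hskew : ∀ a b : V, ⟪a, J b⟫ = -⟪J a, b⟫ := by
    intro a b
    have h := hJiso a (J b)
    rw [hJ2 b] at h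
    rw [← h, inner_neg_right]
  -- find unit W orthogonal to X, JX, Z, JZ
  set S : Submodule ℝ V := Submodule.span ℝ {X, J X, Z, J Z} with hS
  classical
  have hScard : Module.finrank ℝ S ≤ 4 := by
    have h1 : ((({X, J X, Z, J Z} : Finset V) : Set V)) = ({X, J X, Z, J Z} : Set V) := by
      simp
    have h2 := finrank_span_finset_le_card (R := ℝ) ({X, J X, Z, J Z} : Finset V)
    rw [h1] at h2
    refine le_trans h2 ?_
    refine le_trans (Finset.card_insert_le _ _) (Nat.succ_le_succ ?_)
    refine le_trans (Finset.card_insert_le _ _) (Nat.succ_le_succ ?_)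
    refine le_trans (Finset.card_insert_le _ _) (Nat.succ_le_succ ?_)
    simp
  have hcompl : Module.finrank ℝ S + Module.finrank ℝ Sᗮ = Module.finrank ℝ V :=
    Submodule.finrank_add_finrank_orthogonal S
  have hpos : 0 < Module.finrank ℝ Sᗮ := by omega
  have hne : Sᗮ ≠ ⊥ := by
    intro h
    rw [h, finrank_bot] at hpos
    exact lt_irrefl 0 hpos
  obtain ⟨w, hwS, hw0⟩ := Submodule.exists_mem_ne_zero_of_ne_bot hne
  set W : V := ‖w‖⁻¹ • w with hWdef
  have hW1 : ‖W‖ = 1 := norm_smul_inv_norm hw0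
  have hWmem : W ∈ Sᗮ := Sᗮ.smul_mem _ hwS
  have horth : ∀ v ∈ ({X, J X, Z, J Z} : Set V), ⟪v, W⟫ = 0 := fun v hv =>
    hWmem v (Submodule.subset_span hv)
  have hXW : ⟪X, W⟫ = 0 := horth X (by simp)
  have hJXW : ⟪J X, W⟫ = 0 := horth (J X) (by simp)
  have hZW : ⟪Z, W⟫ = 0 := horth Z (by simp)
  have hJZW : ⟪J Z, W⟫ = 0 := horth (J Z) (by simp)
  have hXJW : ⟪X, J W⟫ = 0 := by rw [hskew, hJXW, neg_zero]
  have hZJW : ⟪Z, J W⟫ = 0 := by rw [hskew, hJZW, neg_zero]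
  have hWX : ⟪W, X⟫ = 0 := by rw [real_inner_comm]; exact hXW
  have hWZ : ⟪W, Z⟫ = 0 := by rw [real_inner_comm]; exact hZW
  have hWJX : ⟪W, J X⟫ = 0 := by rw [real_inner_comm]; exact hJXW
  have hWJZ : ⟪W, J Z⟫ = 0 := by rw [real_inner_comm]; exact hJZW
  -- symmetry of K
  have hsym : ∀ a b : V, R a b a b = R b a b a := by
    intro a b
    rw [hR1 a b a b, hR2 b a a b, neg_neg]
  calc R X Y X Y = R X W X W := hpt X Y W hX hY hW1 hXY hXJY hXW hXJW
    _ = R W X W X := hsym X W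
    _ = R W Z W Z := hpt W X Z hW1 hX hZ hWX hWJX hWZ hWJZ
    _ = R Z W Z W := hsym W Z
    _ = R Z U Z U := (hpt Z U W hZ hU hW1 hZU hZJU hZW hZJW).symm
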